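/- (Unconstrained value dominates constrained value — identical updates.) Let U_w be the unique bounded fixed point of the unconstrained single-arm operator U(π) = max{U_S(π), U_NS(π)}, where U_S(π) = ρ(π) + β[ρ(π)U(Γ1(π)) + (1−ρ(π))U(Γ0(π))] and U_NS(π) = w + βU(γ(π)). Suppose the constrained model's unavailable-arm belief update equals γ (the same as its not-play update). Then for the same parameters p00, p10, ρ0, ρ1, w, β and any availability probabilities θ11, θ01, θ00 ∈ [0,1], U_w(π) ≥ V_w(π, y) for all π ∈ [0,1] and y ∈ {0,1}. -/
import Mathlib


open Set

noncomputable section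

/-- Expected immediate reward (success probability) at belief `π`. -/
def rhoB (ρ0 ρ1 π : ℝ) : ℝ := π * ρ0 + (1 - π) * ρ1

/-- Belief update after a play resulting in success. -/
def Gam1 (p00 p10 ρ0 ρ1 π : ℝ) : ℝ :=
  (π * ρ0 * p00 + (1 - π) * ρ1 * p10) / (π * ρ0 + (1 - π) * ρ1)

/-- Belief update after a play resulting in failure. -/
def Gam0 (p00 p10 ρ0 ρ1 π : ℝ) : ℝ :=
  (π * (1 - ρ0) * p00 + (1 - π) * (1 - ρ1) * p10) /
    (π * (1 - ρ0) + (1 - π) * (1 - ρ1))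

/-- Belief update without observation (natural Markov evolution). -/
def gam (p00 p10 π : ℝ) : ℝ := π * p00 + (1 - π) * p10

/-- Action value of playing an available arm. -/
def Lact1 (p00 p10 ρ0 ρ1 β θ11 : ℝ) (V : ℝ → Bool → ℝ) (π : ℝ) : ℝ :=
  rhoB ρ0 ρ1 π
    + β * rhoB ρ0 ρ1 π *
        (θ11 * V (Gam1 p00 p10 ρ0 ρ1 π) true +
          (1 - θ11) * V (Gam1 p00 p10 ρ0 ρ1 π) false)
    + β * (1 - rhoB ρ0 ρ1 π) *
        (θ11 * V (Gam0 p00 p10 ρ0 ρ1 π) true +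
          (1 - θ11) * V (Gam0 p00 p10 ρ0 ρ1 π) false)

/-- Action value of not playing an available arm (subsidy `w`). -/
def Lact0a (p00 p10 β w θ01 : ℝ) (V : ℝ → Bool → ℝ) (π : ℝ) : ℝ :=
  w + β * (θ01 * V (gam p00 p10 π) true + (1 - θ01) * V (gam p00 p10 π) false)

/-- Action value for an unavailable arm (subsidy `w`). -/
def Lact0u (p00 p10 β w θ00 : ℝ) (V : ℝ → Bool → ℝ) (π : ℝ) : ℝ :=
  w + β * (θ00 * V (gam p00 p10 π) true + (1 - θ00) * V (gam p00 p10 π) false)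

/-- Bellman operator of the constrained restless single-armed bandit with
stochastic availability; availability `y` is encoded by `Bool`. -/
def TwOp (p00 p10 ρ0 ρ1 β w θ11 θ01 θ00 : ℝ) (V : ℝ → Bool → ℝ) : ℝ → Bool → ℝ :=
  fun π y =>
    if y then max (Lact1 p00 p10 ρ0 ρ1 β θ11 V π) (Lact0a p00 p10 β w θ01 V π)
    else Lact0u p00 p10 β w θ00 V π

/-- Bounded on the belief space `[0,1] × {0,1}`. -/
def BddOnIcc (V : ℝ → Bool → ℝ) : Prop :=
  ∃ C : ℝ, ∀ π ∈ Icc (0:ℝ) 1, ∀ y : Bool, |V π y| ≤ C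

/-- Fixed point of an operator on the belief space `[0,1] × {0,1}`. -/
def FixedOnIcc (T : (ℝ → Bool → ℝ) → ℝ → Bool → ℝ) (V : ℝ → Bool → ℝ) : Prop :=
  ∀ π ∈ Icc (0:ℝ) 1, ∀ y : Bool, T V π y = V π y

/-- Bellman operator of the unconstrained (always available) restless single
armed bandit with subsidy `w`. -/
def TuOp (p00 p10 ρ0 ρ1 β w : ℝ) (U : ℝ → ℝ) (π : ℝ) : ℝ :=
  max
    (rhoB ρ0 ρ1 π
      + β * (rhoB ρ0 ρ1 π * U (Gam1 p00 p10 ρ0 ρ1 π)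
          + (1 - rhoB ρ0 ρ1 π) * U (Gam0 p00 p10 ρ0 ρ1 π)))
    (w + β * U (gam p00 p10 π))


private lemma gam_mem {p00 p10 π : ℝ} (hp00 : p00 ∈ Icc (0:ℝ) 1)
    (hp10 : p10 ∈ Icc (0:ℝ) 1) (hπ : π ∈ Icc (0:ℝ) 1) :
    gam p00 p10 π ∈ Icc (0:ℝ) 1 := by
  obtain ⟨h1, h2⟩ := hp00; obtain ⟨h3, h4⟩ := hp10; obtain ⟨h5, h6⟩ := hπ
  unfold gam
  constructor <;> nlinarith

private lemma div_mem_aux {a b : ℝ} (hb : 0 < b) (h0 : 0 ≤ a) (h1 : a ≤ b) :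
    a / b ∈ Icc (0:ℝ) 1 :=
  ⟨div_nonneg h0 hb.le, (div_le_one hb).2 h1⟩

private lemma Gam1_mem {p00 p10 ρ0 ρ1 π : ℝ} (hp00 : p00 ∈ Icc (0:ℝ) 1)
    (hp10 : p10 ∈ Icc (0:ℝ) 1) (hρ0 : 0 < ρ0) (hρ01 : ρ0 < ρ1) (hρ1 : ρ1 < 1)
    (hπ : π ∈ Icc (0:ℝ) 1) : Gam1 p00 p10 ρ0 ρ1 π ∈ Icc (0:ℝ) 1 := by
  obtain ⟨h1, h2⟩ := hp00; obtain ⟨h3, h4⟩ := hp10; obtain ⟨h5, h6⟩ := hπ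
  apply div_mem_aux
  · nlinarith
  · have k1 : 0 ≤ π * ρ0 * p00 := by positivity
    have k2 : 0 ≤ (1 - π) * ρ1 * p10 := by
      apply mul_nonneg (mul_nonneg (by linarith) (by linarith)) h3
    linarith
  · have k1 : 0 ≤ π * ρ0 * (1 - p00) := by
      apply mul_nonneg (by positivity) (by linarith)
    have k2 : 0 ≤ (1 - π) * ρ1 * (1 - p10) := by
      apply mul_nonneg (mul_nonneg (by linarith) (by linarith)) (by linarith)
    nlinarith

private lemma Gam0_mem {p00 p10 ρ0 ρ1 π : ℝ} (hp00 : p00 ∈ Icc (0:ℝ) 1)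
    (hp10 : p10 ∈ Icc (0:ℝ) 1) (hρ0 : 0 < ρ0) (hρ01 : ρ0 < ρ1) (hρ1 : ρ1 < 1)
    (hπ : π ∈ Icc (0:ℝ) 1) : Gam0 p00 p10 ρ0 ρ1 π ∈ Icc (0:ℝ) 1 := by
  obtain ⟨h1, h2⟩ := hp00; obtain ⟨h3, h4⟩ := hp10; obtain ⟨h5, h6⟩ := hπ
  apply div_mem_aux
  · nlinarith
  · have k1 : 0 ≤ π * (1 - ρ0) * p00 := by
      apply mul_nonneg (mul_nonneg h5 (by linarith)) h1
    have k2 : 0 ≤ (1 - π) * (1 - ρ1) * p10 := by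
      apply mul_nonneg (mul_nonneg (by linarith) (by linarith)) h3
    linarith
  · have k1 : 0 ≤ π * (1 - ρ0) * (1 - p00) := by
      apply mul_nonneg (mul_nonneg h5 (by linarith)) (by linarith)
    have k2 : 0 ≤ (1 - π) * (1 - ρ1) * (1 - p10) := by
      apply mul_nonneg (mul_nonneg (by linarith) (by linarith)) (by linarith)
    nlinarith

private lemma rhoB_mem {ρ0 ρ1 π : ℝ} (hρ0 : 0 < ρ0) (hρ01 : ρ0 < ρ1) (hρ1 : ρ1 < 1)
    (hπ : π ∈ Icc (0:ℝ) 1) : rhoB ρ0 ρ1 π ∈ Icc (0:ℝ) 1 := by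
  obtain ⟨h5, h6⟩ := hπ
  unfold rhoB
  constructor <;> nlinarith

/-- convex-combination bound: if d1 ≤ B, d2 ≤ B, θ ∈ [0,1], then
θ d1 + (1-θ) d2 ≤ B -/
private lemma convex_le {θ d1 d2 B : ℝ} (hθ : θ ∈ Icc (0:ℝ) 1)
    (h1 : d1 ≤ B) (h2 : d2 ≤ B) : θ * d1 + (1 - θ) * d2 ≤ B := by
  obtain ⟨hθ0, hθ1⟩ := hθ
  nlinarith

/-- **Unconstrained value dominates constrained value;
identical updates.** With the same parameters and the unavailable-arm
belief update equal to `γ`, the unconstrained value `U_w` dominates the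
constrained value: `U_w(π) ≥ V_w(π,y)` for all `π ∈ [0,1]`, `y ∈ {0,1}`. -/
theorem stmt14 (p00 p10 ρ0 ρ1 β w θ11 θ01 θ00 : ℝ)
    (hp00 : p00 ∈ Icc (0:ℝ) 1) (hp10 : p10 ∈ Icc (0:ℝ) 1)
    (hρ0 : 0 < ρ0) (hρ01 : ρ0 < ρ1) (hρ1 : ρ1 < 1)
    (hβ : β ∈ Ioo (0:ℝ) 1)
    (hθ11 : θ11 ∈ Icc (0:ℝ) 1) (hθ01 : θ01 ∈ Icc (0:ℝ) 1) (hθ00 : θ00 ∈ Icc (0:ℝ) 1)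
    -- `U` is the unique bounded fixed point of the unconstrained operator
    (U : ℝ → ℝ)
    (hUb : ∃ C : ℝ, ∀ π ∈ Icc (0:ℝ) 1, |U π| ≤ C)
    (hUfix : ∀ π ∈ Icc (0:ℝ) 1, TuOp p00 p10 ρ0 ρ1 β w U π = U π)
    -- `V` is the unique bounded fixed point of the constrained operator
    (V : ℝ → Bool → ℝ) (hVb : BddOnIcc V)
    (hVfix : FixedOnIcc (TwOp p00 p10 ρ0 ρ1 β w θ11 θ01 θ00) V) :
    ∀ π ∈ Icc (0:ℝ) 1, ∀ y : Bool, V π y ≤ U π := by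
  obtain ⟨hβ0, hβ1⟩ := hβ
  obtain ⟨C1, hC1⟩ := hUb
  obtain ⟨C2, hC2⟩ := hVb
  set C : ℝ := C1 + C2 with hC
  -- key induction
  have key : ∀ n : ℕ, ∀ π ∈ Icc (0:ℝ) 1, ∀ y : Bool, V π y - U π ≤ β ^ n * C := by
    intro n
    induction n with
    | zero =>
      intro π hπ y
      have h1 := hC1 π hπ
      have h2 := hC2 π hπ y
      rw [abs_le] at h1 h2
      simp only [pow_zero, one_mul, hC]
      linarith
    | succ n ih =>
      intro π hπ y
      have hγ := gam_mem hp00 hp10 hπ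
      have hΓ1 := Gam1_mem hp00 hp10 hρ0 hρ01 hρ1 hπ
      have hΓ0 := Gam0_mem hp00 hp10 hρ0 hρ01 hρ1 hπ
      have hρπ := rhoB_mem hρ0 hρ01 hρ1 hπ
      have hU : U π = TuOp p00 p10 ρ0 ρ1 β w U π := (hUfix π hπ).symm
      have hV := (hVfix π hπ y).symm
      have hUns : w + β * U (gam p00 p10 π) ≤ U π := by
        rw [hU]; exact le_max_right _ _
      have hUs : rhoB ρ0 ρ1 π
          + β * (rhoB ρ0 ρ1 π * U (Gam1 p00 p10 ρ0 ρ1 π)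
              + (1 - rhoB ρ0 ρ1 π) * U (Gam0 p00 p10 ρ0 ρ1 π)) ≤ U π := by
        rw [hU]; exact le_max_left _ _
      have dγt := ih (gam p00 p10 π) hγ true
      have dγf := ih (gam p00 p10 π) hγ false
      have dΓ1t := ih _ hΓ1 true
      have dΓ1f := ih _ hΓ1 false
      have dΓ0t := ih _ hΓ0 true
      have dΓ0f := ih _ hΓ0 false
      set B : ℝ := β ^ n * C with hB
      -- not-play branch bounds (generic in θ)
      have hidle : ∀ θ : ℝ, θ ∈ Icc (0:ℝ) 1 →
          w + β * (θ * V (gam p00 p10 π) true + (1 - θ) * V (gam p00 p10 π) false)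
            - U π ≤ β ^ (n + 1) * C := by
        intro θ hθ
        have hcc : θ * (V (gam p00 p10 π) true - U (gam p00 p10 π))
            + (1 - θ) * (V (gam p00 p10 π) false - U (gam p00 p10 π)) ≤ B :=
          convex_le hθ dγt dγf
        have : β * (θ * (V (gam p00 p10 π) true - U (gam p00 p10 π))
            + (1 - θ) * (V (gam p00 p10 π) false - U (gam p00 p10 π)))
            ≤ β * B := by
          exact mul_le_mul_of_nonneg_left hcc hβ0.le
        have hpow : β ^ (n + 1) * C = β * B := by ring
        rw [hpow]
        obtain ⟨hθ0, hθ1⟩ := hθ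
        nlinarith [hUns]
      rw [hV]
      unfold TwOp
      cases y with
      | false =>
        simp only [Bool.false_eq_true, if_false]
        unfold Lact0u
        have := hidle θ00 hθ00
        linarith
      | true =>
        simp only [if_true]
        rw [sub_le_iff_le_add, max_le_iff]
        refine ⟨?_, ?_⟩ <;> rw [← sub_le_iff_le_add]
        · -- play branch
          unfold Lact1
          have hc1 : θ11 * (V (Gam1 p00 p10 ρ0 ρ1 π) true - U (Gam1 p00 p10 ρ0 ρ1 π))
              + (1 - θ11) * (V (Gam1 p00 p10 ρ0 ρ1 π) false - U (Gam1 p00 p10 ρ0 ρ1 π))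
              ≤ B := convex_le hθ11 dΓ1t dΓ1f
          have hc0 : θ11 * (V (Gam0 p00 p10 ρ0 ρ1 π) true - U (Gam0 p00 p10 ρ0 ρ1 π))
              + (1 - θ11) * (V (Gam0 p00 p10 ρ0 ρ1 π) false - U (Gam0 p00 p10 ρ0 ρ1 π))
              ≤ B := convex_le hθ11 dΓ0t dΓ0f
          obtain ⟨hr0, hr1⟩ := hρπ
          have hpow : β ^ (n + 1) * C = β * B := by ring
          have h1 : β * rhoB ρ0 ρ1 π *
              (θ11 * (V (Gam1 p00 p10 ρ0 ρ1 π) true - U (Gam1 p00 p10 ρ0 ρ1 π))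
              + (1 - θ11) * (V (Gam1 p00 p10 ρ0 ρ1 π) false - U (Gam1 p00 p10 ρ0 ρ1 π)))
              ≤ β * rhoB ρ0 ρ1 π * B :=
            mul_le_mul_of_nonneg_left hc1 (mul_nonneg hβ0.le hr0)
          have h0 : β * (1 - rhoB ρ0 ρ1 π) *
              (θ11 * (V (Gam0 p00 p10 ρ0 ρ1 π) true - U (Gam0 p00 p10 ρ0 ρ1 π))
              + (1 - θ11) * (V (Gam0 p00 p10 ρ0 ρ1 π) false - U (Gam0 p00 p10 ρ0 ρ1 π)))
              ≤ β * (1 - rhoB ρ0 ρ1 π) * B :=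
            mul_le_mul_of_nonneg_left hc0 (mul_nonneg hβ0.le (by linarith))
          rw [hpow]
          nlinarith [hUs]
        · -- idle branch
          unfold Lact0a
          linarith [hidle θ01 hθ01]
  -- pass to the limit
  intro π hπ y
  have hlim : Filter.Tendsto (fun n : ℕ => β ^ n * C) Filter.atTop (nhds 0) := by
    have := tendsto_pow_atTop_nhds_zero_of_lt_one hβ0.le hβ1
    simpa using this.mul_const C
  have hle : V π y - U π ≤ 0 :=
    ge_of_tendsto' hlim (fun n => key n π hπ y)
  linarith
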